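/- Let A be substochastic nonnegative, with dynamics X(k+1) = A X(k) + e_s u(k), X(0)=0. Define the distance-d level sets D_d = set of vertices at directed graph distance exactly d from s. Then for p ∈ {1, 2, ∞} (indeed any p ≥ 1) and any horizon k_f, the map d ↦ max_{i ∈ D_d} G_p(i, k_f) is nonincreasing in d wherever D_d and D_{d+1} are nonempty, assuming all vertices at positive distance have self-weight strictly less than 1. -/

import Mathlib

/-- Zero-initial-state trajectory of `X(k+1) = A X(k) + e_s u(k)`. -/
def netTraj {n : ℕ} (A : Matrix (Fin n) (Fin n) ℝ) (s : Fin n) (u : ℕ → ℝ) :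
    ℕ → Fin n → ℝ
  | 0 => 0
  | k + 1 => A.mulVec (netTraj A s u k) + Pi.single s (u k)

/-- A directed path of length `L` from `s` to `t` in the digraph of `A`
(edge from `j` to `i` iff `A i j > 0`). -/
def IsDirPath {n : ℕ} (A : Matrix (Fin n) (Fin n) ℝ) (s t : Fin n)
    (L : ℕ) (p : ℕ → Fin n) : Prop :=
  p 0 = s ∧ p L = t ∧ ∀ k < L, 0 < A (p (k + 1)) (p k)

/-- `i` is at directed graph distance exactly `d` from `s` in the digraph of `A`. -/
def DistEq {n : ℕ} (A : Matrix (Fin n) (Fin n) ℝ) (s i : Fin n) (d : ℕ) : Prop :=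
  (∃ p : ℕ → Fin n, IsDirPath A s i d p) ∧
  ∀ d' < d, ¬ ∃ p : ℕ → Fin n, IsDirPath A s i d' p

section Aux
variable {n : ℕ} {A : Matrix (Fin n) (Fin n) ℝ} {s : Fin n}

/-- reachability -/
def Reach (A : Matrix (Fin n) (Fin n) ℝ) (s q : Fin n) : Prop :=
  ∃ L p, IsDirPath A s q L p

lemma distEq_unique {q : Fin n} {e e' : ℕ} (h : DistEq A s q e) (h' : DistEq A s q e') :
    e = e' := by
  rcases lt_trichotomy e e' with hlt | heq | hlt
  · exact absurd h.1 (h'.2 e hlt)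
  · exact heq
  · exact absurd h'.1 (h.2 e' hlt)

lemma reach_distEq {q : Fin n} (h : Reach A s q) : ∃ e, DistEq A s q e := by
  classical
  obtain ⟨L, p, hp⟩ := h
  have hex : ∃ L, ∃ p, IsDirPath A s q L p := ⟨L, p, hp⟩
  exact ⟨Nat.find hex, Nat.find_spec hex, fun d' hd' => Nat.find_min hex hd'⟩

lemma reach_succ {q j : Fin n} {e : ℕ} (hj : ∃ p, IsDirPath A s j e p)
    (hqj : 0 < A q j) : ∃ p, IsDirPath A s q (e + 1) p := by
  obtain ⟨p, hp0, hpL, hpe⟩ := hj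
  refine ⟨fun k => if k = e + 1 then q else p k, by simp [hp0], by simp, ?_⟩
  intro k hk
  rcases Nat.lt_succ_iff_lt_or_eq.1 hk with hk | hk
  · have h1 : k + 1 ≠ e + 1 := by omega
    have h2 : k ≠ e + 1 := by omega
    simpa [h1, h2, show k ≠ e by omega] using hpe k hk
  · subst hk
    have h2 : k ≠ k + 1 := by omega
    simpa [h2, hpL] using hqj

lemma distEq_zero_self : DistEq A s s 0 :=
  ⟨⟨fun _ => s, rfl, rfl, fun k hk => absurd hk (Nat.not_lt_zero k)⟩,
    fun d' hd' => absurd hd' (Nat.not_lt_zero d')⟩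

lemma ne_s_of_distEq_pos {q : Fin n} {e : ℕ} (h : DistEq A s q e) (he : 0 < e) : q ≠ s := by
  rintro rfl
  exact h.2 0 he distEq_zero_self.1

lemma reach_of_traj_ne_zero (hA : ∀ i j, 0 ≤ A i j) {u : ℕ → ℝ} :
    ∀ k (j : Fin n), netTraj A s u k j ≠ 0 → Reach A s j := by
  intro k
  induction k with
  | zero => intro j hj; simp [netTraj] at hj
  | succ k ih =>
    intro j hj
    by_cases hjs : j = s
    · exact ⟨0, fun _ => s, rfl, hjs.symm, fun k hk => absurd hk (Nat.not_lt_zero k)⟩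
    · have : netTraj A s u (k + 1) j = ∑ m, A j m * netTraj A s u k m := by
        simp [netTraj, Matrix.mulVec, dotProduct, Pi.single_apply, hjs]
      rw [this] at hj
      obtain ⟨m, -, hm⟩ := Finset.exists_ne_zero_of_sum_ne_zero hj
      have hAm : A j m ≠ 0 := fun h => hm (by simp [h])
      have hXm : netTraj A s u k m ≠ 0 := fun h => hm (by simp [h])
      obtain ⟨e, he⟩ := reach_distEq (ih m hXm)
      obtain ⟨p, hp⟩ := reach_succ he.1 (lt_of_le_of_ne (hA j m) (Ne.symm hAm))
      exact ⟨_, p, hp⟩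

end Aux

section Aux2
variable {n : ℕ} {A : Matrix (Fin n) (Fin n) ℝ} {s : Fin n}

lemma netTraj_succ_ne {u : ℕ → ℝ} {j : Fin n} (hjs : j ≠ s) (k : ℕ) :
    netTraj A s u (k + 1) j = ∑ m, A j m * netTraj A s u k m := by
  simp [netTraj, Matrix.mulVec, dotProduct, Pi.single_apply, hjs]

lemma convex_pow_bound (w z : Fin n → ℝ) (hw : ∀ i, 0 ≤ w i)
    (hw1 : ∑ i, w i ≤ 1) (hz : ∀ i, 0 ≤ z i) {p : ℝ} (hp : 1 ≤ p) :
    (∑ i, w i * z i) ^ p ≤ ∑ i, w i * z i ^ p := by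
  have hp0 : p ≠ 0 := by positivity
  have key := Real.rpow_arith_mean_le_arith_mean_rpow (Finset.univ : Finset (Option (Fin n)))
    (fun o => o.elim (1 - ∑ i, w i) w) (fun o => o.elim 0 z)
    (by rintro (_ | i) -
        · simpa using by linarith
        · exact hw i)
    (by rw [Fintype.sum_option]; simp)
    (by rintro (_ | i) -
        · exact le_refl 0
        · exact hz i) hp
  rw [Fintype.sum_option, Fintype.sum_option] at key
  simpa [Real.zero_rpow hp0] using key

lemma traj_pow_step (hA : ∀ i j, 0 ≤ A i j) (hrow : ∀ i, ∑ j, A i j ≤ 1)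
    {q : Fin n} (hq : q ≠ s) (u : ℕ → ℝ) (k : ℕ) {p : ℝ} (hp : 1 ≤ p) :
    |netTraj A s u (k + 1) q| ^ p ≤ ∑ m, A q m * |netTraj A s u k m| ^ p := by
  rw [netTraj_succ_ne hq]
  have h1 : |∑ m, A q m * netTraj A s u k m| ≤ ∑ m, A q m * |netTraj A s u k m| := by
    refine (Finset.abs_sum_le_sum_abs _ _).trans (le_of_eq ?_)
    refine Finset.sum_congr rfl fun m _ => ?_
    rw [abs_mul, abs_of_nonneg (hA q m)]
  calc |∑ m, A q m * netTraj A s u k m| ^ p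
      ≤ (∑ m, A q m * |netTraj A s u k m|) ^ p :=
        Real.rpow_le_rpow (abs_nonneg _) h1 (by linarith)
    _ ≤ ∑ m, A q m * |netTraj A s u k m| ^ p :=
        convex_pow_bound _ _ (hA q) (hrow q) (fun m => abs_nonneg _) hp

lemma traj_abs_step (hA : ∀ i j, 0 ≤ A i j)
    {q : Fin n} (hq : q ≠ s) (u : ℕ → ℝ) (k : ℕ) :
    |netTraj A s u (k + 1) q| ≤ ∑ m, A q m * |netTraj A s u k m| := by
  rw [netTraj_succ_ne hq]
  refine (Finset.abs_sum_le_sum_abs _ _).trans (le_of_eq ?_)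
  refine Finset.sum_congr rfl fun m _ => ?_
  rw [abs_mul, abs_of_nonneg (hA q m)]

lemma traj_le (hA : ∀ i j, 0 ≤ A i j) (hrow : ∀ i, ∑ j, A i j ≤ 1)
    (u : ℕ → ℝ) {K : ℕ} (hu : ∀ k' < K, |u k'| ≤ 1) :
    ∀ k ≤ K, ∀ j, |netTraj A s u k j| ≤ (k : ℝ) := by
  intro k
  induction k with
  | zero => intro _ j; simp [netTraj]
  | succ k ih =>
    intro hk j
    have hk' : k ≤ K := by omega
    have h1 : |netTraj A s u (k + 1) j|
        ≤ ∑ m, A j m * |netTraj A s u k m| + |u k| := by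
      have hrfl : netTraj A s u (k + 1) j
          = A.mulVec (netTraj A s u k) j + (Pi.single s (u k) : Fin n → ℝ) j := rfl
      rw [hrfl]
      refine (abs_add_le _ _).trans (add_le_add ?_ ?_)
      · show |∑ m, A j m * netTraj A s u k m| ≤ _
        refine (Finset.abs_sum_le_sum_abs _ _).trans (le_of_eq ?_)
        refine Finset.sum_congr rfl fun m _ => ?_
        rw [abs_mul, abs_of_nonneg (hA j m)]
      · rw [Pi.single_apply]
        split <;> simp [abs_nonneg]
    have h2 : ∑ m, A j m * |netTraj A s u k m| ≤ (k : ℝ) := by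
      calc ∑ m, A j m * |netTraj A s u k m| ≤ ∑ m, A j m * (k : ℝ) :=
            Finset.sum_le_sum fun m _ =>
              mul_le_mul_of_nonneg_left (ih hk' m) (hA j m)
        _ = (∑ m, A j m) * (k : ℝ) := by rw [Finset.sum_mul]
        _ ≤ 1 * (k : ℝ) := mul_le_mul_of_nonneg_right (hrow j) (Nat.cast_nonneg k)
        _ = (k : ℝ) := one_mul _
    have h3 : |u k| ≤ 1 := hu k (by omega)
    push_cast
    linarith

end Aux2

section Aux3
variable {n : ℕ} {A : Matrix (Fin n) (Fin n) ℝ} {s : Fin n}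

lemma pred_dist_ge (hA : ∀ i j, 0 ≤ A i j) {q j : Fin n} {e e' d : ℕ}
    (hq : DistEq A s q e) (he : d + 1 ≤ e) (hAqj : 0 < A q j)
    (hj : DistEq A s j e') : d ≤ e' := by
  by_contra h
  have he' : e' + 1 < e := by omega
  exact hq.2 (e' + 1) he' (reach_succ hj.1 hAqj)

lemma lp_invariant (hA : ∀ i j, 0 ≤ A i j) (hrow : ∀ i, ∑ j, A i j ≤ 1)
    {p : ℝ} (hp : 1 ≤ p) (u : ℕ → ℝ) (d kf : ℕ)
    (D : Finset (Fin n)) (hD : ∀ c, c ∈ D ↔ DistEq A s c d) (hDne : D.Nonempty) :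
    ∀ K, K ≤ kf → ∀ q : Fin n, (∃ e, d + 1 ≤ e ∧ DistEq A s q e) →
      ∑ k ∈ Finset.range (K + 1), |netTraj A s u k q| ^ p ≤
        D.sup' hDne (fun c => ∑ k ∈ Finset.range (kf + 1), |netTraj A s u k c| ^ p) := by
  have hp0 : p ≠ 0 := by positivity
  set T := D.sup' hDne (fun c => ∑ k ∈ Finset.range (kf + 1), |netTraj A s u k c| ^ p) with hT
  have hT0 : 0 ≤ T := by
    obtain ⟨c, hc⟩ := hDne
    calc (0 : ℝ) ≤ ∑ k ∈ Finset.range (kf + 1), |netTraj A s u k c| ^ p :=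
          Finset.sum_nonneg fun k _ => Real.rpow_nonneg (abs_nonneg _) p
      _ ≤ T := by rw [hT]; exact Finset.le_sup' (fun c => ∑ k ∈ Finset.range (kf + 1), |netTraj A s u k c| ^ p) hc
  intro K
  induction K with
  | zero =>
    intro _ q _
    simpa [netTraj, Real.zero_rpow hp0] using hT0
  | succ K ih =>
    intro hK q hq
    obtain ⟨e, hde, hqe⟩ := hq
    have hqs : q ≠ s := ne_s_of_distEq_pos hqe (by omega)
    rw [Finset.sum_range_succ']
    have h0 : |netTraj A s u 0 q| ^ p = 0 := by simp [netTraj, Real.zero_rpow hp0]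
    rw [h0, add_zero]
    have hstep : ∑ k ∈ Finset.range (K + 1), |netTraj A s u (k + 1) q| ^ p
        ≤ ∑ m, A q m * ∑ k ∈ Finset.range (K + 1), |netTraj A s u k m| ^ p := by
      calc ∑ k ∈ Finset.range (K + 1), |netTraj A s u (k + 1) q| ^ p
          ≤ ∑ k ∈ Finset.range (K + 1), ∑ m, A q m * |netTraj A s u k m| ^ p :=
            Finset.sum_le_sum fun k _ => traj_pow_step hA hrow hqs u k hp
        _ = ∑ m, A q m * ∑ k ∈ Finset.range (K + 1), |netTraj A s u k m| ^ p := by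
            rw [Finset.sum_comm]
            exact Finset.sum_congr rfl fun m _ => by rw [Finset.mul_sum]
    refine hstep.trans ?_
    have hterm : ∀ m, A q m * ∑ k ∈ Finset.range (K + 1), |netTraj A s u k m| ^ p
        ≤ A q m * T := by
      intro m
      by_cases hAqm : A q m = 0
      · simp [hAqm]
      have hAqm' : 0 < A q m := lt_of_le_of_ne (hA q m) (Ne.symm hAqm)
      refine mul_le_mul_of_nonneg_left ?_ (hA q m)
      by_cases hreach : Reach A s m
      · obtain ⟨e', he'⟩ := reach_distEq hreach
        have hde' : d ≤ e' := pred_dist_ge hA hqe hde hAqm' he'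
        rcases eq_or_lt_of_le hde' with heq | hlt
        · have hmD : m ∈ D := (hD m).2 (heq ▸ he')
          calc ∑ k ∈ Finset.range (K + 1), |netTraj A s u k m| ^ p
              ≤ ∑ k ∈ Finset.range (kf + 1), |netTraj A s u k m| ^ p :=
                Finset.sum_le_sum_of_subset_of_nonneg
                  (Finset.range_subset_range.2 (by omega))
                  (fun k _ _ => Real.rpow_nonneg (abs_nonneg _) p)
            _ ≤ T := by rw [hT]; exact Finset.le_sup' (fun c => ∑ k ∈ Finset.range (kf + 1), |netTraj A s u k c| ^ p) hmD
        · exact ih (by omega) m ⟨e', by omega, he'⟩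
      · have hzero : ∀ k, netTraj A s u k m = 0 := fun k => by
          by_contra h
          exact hreach (reach_of_traj_ne_zero hA k m h)
        simp only [hzero]
        simpa [Real.zero_rpow hp0] using hT0
    calc ∑ m, A q m * ∑ k ∈ Finset.range (K + 1), |netTraj A s u k m| ^ p
        ≤ ∑ m, A q m * T := Finset.sum_le_sum fun m _ => hterm m
      _ = (∑ m, A q m) * T := by rw [Finset.sum_mul]
      _ ≤ 1 * T := mul_le_mul_of_nonneg_right (hrow q) hT0
      _ = T := one_mul _

lemma linf_invariant (hA : ∀ i j, 0 ≤ A i j) (hrow : ∀ i, ∑ j, A i j ≤ 1)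
    (u : ℕ → ℝ) (d kf : ℕ)
    (D : Finset (Fin n)) (hD : ∀ c, c ∈ D ↔ DistEq A s c d) (hDne : D.Nonempty) :
    ∀ K, K ≤ kf → ∀ q : Fin n, (∃ e, d + 1 ≤ e ∧ DistEq A s q e) →
      |netTraj A s u K q| ≤
        D.sup' hDne (fun c => (Finset.range (kf + 1)).sup' (by simp)
          (fun k => |netTraj A s u k c|)) := by
  set M := D.sup' hDne (fun c => (Finset.range (kf + 1)).sup' (by simp)
      (fun k => |netTraj A s u k c|)) with hM
  have hM0 : 0 ≤ M := by
    obtain ⟨c, hc⟩ := hDne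
    calc (0 : ℝ) ≤ |netTraj A s u 0 c| := abs_nonneg _
      _ ≤ (Finset.range (kf + 1)).sup' (by simp) (fun k => |netTraj A s u k c|) :=
          Finset.le_sup' (fun k => |netTraj A s u k c|) (Finset.mem_range.2 (Nat.succ_pos kf))
      _ ≤ M := by rw [hM]; exact Finset.le_sup' (fun c => (Finset.range (kf + 1)).sup' (by simp) (fun k => |netTraj A s u k c|)) hc
  intro K
  induction K with
  | zero => intro _ q _; simpa [netTraj] using hM0
  | succ K ih =>
    intro hK q hq
    obtain ⟨e, hde, hqe⟩ := hq
    have hqs : q ≠ s := ne_s_of_distEq_pos hqe (by omega)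
    refine (traj_abs_step hA hqs u K).trans ?_
    have hterm : ∀ m, A q m * |netTraj A s u K m| ≤ A q m * M := by
      intro m
      by_cases hAqm : A q m = 0
      · simp [hAqm]
      have hAqm' : 0 < A q m := lt_of_le_of_ne (hA q m) (Ne.symm hAqm)
      refine mul_le_mul_of_nonneg_left ?_ (hA q m)
      by_cases hreach : Reach A s m
      · obtain ⟨e', he'⟩ := reach_distEq hreach
        have hde' : d ≤ e' := pred_dist_ge hA hqe hde hAqm' he'
        rcases eq_or_lt_of_le hde' with heq | hlt
        · have hmD : m ∈ D := (hD m).2 (heq ▸ he')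
          calc |netTraj A s u K m|
              ≤ (Finset.range (kf + 1)).sup' (by simp) (fun k => |netTraj A s u k m|) :=
                Finset.le_sup' (fun k => |netTraj A s u k m|) (Finset.mem_range.2 (by omega))
            _ ≤ M := by rw [hM]; exact Finset.le_sup' (fun c => (Finset.range (kf + 1)).sup' (by simp) (fun k => |netTraj A s u k c|)) hmD
        · exact ih (by omega) m ⟨e', by omega, he'⟩
      · have hzero : netTraj A s u K m = 0 := by
          by_contra h
          exact hreach (reach_of_traj_ne_zero hA K m h)
        simpa [hzero] using hM0
    calc ∑ m, A q m * |netTraj A s u K m|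
        ≤ ∑ m, A q m * M := Finset.sum_le_sum fun m _ => hterm m
      _ = (∑ m, A q m) * M := by rw [Finset.sum_mul]
      _ ≤ 1 * M := mul_le_mul_of_nonneg_right (hrow q) hM0
      _ = M := one_mul _

end Aux3

/-- Finite-horizon `l_p` gain of the network from input at `s` to output at node `i`. -/
noncomputable def lpGain {n : ℕ} (A : Matrix (Fin n) (Fin n) ℝ) (s i : Fin n)
    (p : ℝ) (kf : ℕ) : ℝ :=
  sSup {g : ℝ | ∃ u : ℕ → ℝ,
    (∑ k ∈ Finset.range (kf + 1), |u k| ^ p) ^ (1 / p) = 1 ∧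
    g = (∑ k ∈ Finset.range (kf + 1), |netTraj A s u k i| ^ p) ^ (1 / p)}

/-- Finite-horizon `l_∞` gain of the network from input at `s` to output at node `i`. -/
noncomputable def linfGain {n : ℕ} (A : Matrix (Fin n) (Fin n) ℝ) (s i : Fin n)
    (kf : ℕ) : ℝ :=
  sSup {g : ℝ | ∃ u : ℕ → ℝ, (∀ k ≤ kf, |u k| ≤ 1) ∧
    g = (Finset.range (kf + 1)).sup' (by simp) (fun k => |netTraj A s u k i|)}

section Aux4
variable {n : ℕ} {A : Matrix (Fin n) (Fin n) ℝ} {s : Fin n}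

lemma lp_unit_abs_le {u : ℕ → ℝ} {p : ℝ} (hp : 1 ≤ p) {kf : ℕ}
    (hu : (∑ k ∈ Finset.range (kf + 1), |u k| ^ p) ^ (1 / p) = 1) :
    ∀ k ≤ kf, |u k| ≤ 1 := by
  have hppos : (0 : ℝ) < p := by positivity
  have hsnn : (0 : ℝ) ≤ ∑ k ∈ Finset.range (kf + 1), |u k| ^ p :=
    Finset.sum_nonneg fun k _ => Real.rpow_nonneg (abs_nonneg _) p
  have hsum1 : ∑ k ∈ Finset.range (kf + 1), |u k| ^ p = 1 := by
    have h1 : ((∑ k ∈ Finset.range (kf + 1), |u k| ^ p) ^ (1 / p)) ^ p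
        = ∑ k ∈ Finset.range (kf + 1), |u k| ^ p := by
      rw [← Real.rpow_mul hsnn, one_div_mul_cancel (ne_of_gt hppos), Real.rpow_one]
    rw [hu, Real.one_rpow] at h1
    exact h1.symm
  intro k hk
  have hterm : |u k| ^ p ≤ 1 := by
    rw [← hsum1]
    exact Finset.single_le_sum (f := fun k => |u k| ^ p)
      (fun k _ => Real.rpow_nonneg (abs_nonneg _) p) (Finset.mem_range.2 (by omega))
  by_contra h
  push_neg at h
  have : (1 : ℝ) < |u k| ^ p := by
    calc (1 : ℝ) = 1 ^ p := (Real.one_rpow p).symm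
      _ < |u k| ^ p := Real.rpow_lt_rpow zero_le_one h hppos
  linarith

lemma lp_set_bddAbove (hA : ∀ i j, 0 ≤ A i j) (hrow : ∀ i, ∑ j, A i j ≤ 1)
    (i : Fin n) {p : ℝ} (hp : 1 ≤ p) (kf : ℕ) :
    BddAbove {g : ℝ | ∃ u : ℕ → ℝ,
      (∑ k ∈ Finset.range (kf + 1), |u k| ^ p) ^ (1 / p) = 1 ∧
      g = (∑ k ∈ Finset.range (kf + 1), |netTraj A s u k i| ^ p) ^ (1 / p)} := by
  have hppos : (0 : ℝ) < p := by positivity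
  refine ⟨((kf + 1 : ℝ) * (kf : ℝ) ^ p) ^ (1 / p), ?_⟩
  rintro g ⟨u, hu1, rfl⟩
  have hub := lp_unit_abs_le hp hu1
  have htraj := traj_le (A := A) (s := s) hA hrow u (K := kf)
    (fun k' hk' => hub k' (le_of_lt hk'))
  have hsum : ∑ k ∈ Finset.range (kf + 1), |netTraj A s u k i| ^ p
      ≤ (kf + 1 : ℝ) * (kf : ℝ) ^ p := by
    calc ∑ k ∈ Finset.range (kf + 1), |netTraj A s u k i| ^ p
        ≤ ∑ _k ∈ Finset.range (kf + 1), (kf : ℝ) ^ p := by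
          refine Finset.sum_le_sum fun k hk => ?_
          refine Real.rpow_le_rpow (abs_nonneg _) ?_ (le_of_lt hppos)
          calc |netTraj A s u k i| ≤ (k : ℝ) :=
                htraj k (Nat.lt_succ_iff.1 (Finset.mem_range.1 hk)) i
            _ ≤ (kf : ℝ) := Nat.cast_le.2 (Nat.lt_succ_iff.1 (Finset.mem_range.1 hk))
      _ = (kf + 1 : ℝ) * (kf : ℝ) ^ p := by
          rw [Finset.sum_const, Finset.card_range, nsmul_eq_mul]
          push_cast; ring
  exact Real.rpow_le_rpow
    (Finset.sum_nonneg fun k _ => Real.rpow_nonneg (abs_nonneg _) p) hsum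
    (by positivity)

lemma lpGain_nonneg (hA : ∀ i j, 0 ≤ A i j) (hrow : ∀ i, ∑ j, A i j ≤ 1)
    (i : Fin n) {p : ℝ} (hp : 1 ≤ p) (kf : ℕ) : 0 ≤ lpGain A s i p kf := by
  have hppos : (0 : ℝ) < p := by positivity
  set u0 : ℕ → ℝ := fun k => if k = 0 then 1 else 0 with hu0
  have hnorm : (∑ k ∈ Finset.range (kf + 1), |u0 k| ^ p) ^ (1 / p) = 1 := by
    have : ∑ k ∈ Finset.range (kf + 1), |u0 k| ^ p = 1 := by
      rw [Finset.sum_eq_single 0]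
      · simp [hu0]
      · intro k _ hk; simp [hu0, hk, Real.zero_rpow (ne_of_gt hppos)]
      · intro h; exact absurd (Finset.mem_range.2 (Nat.succ_pos kf)) h
    rw [this, Real.one_rpow]
  have hmem : (∑ k ∈ Finset.range (kf + 1), |netTraj A s u0 k i| ^ p) ^ (1 / p)
      ∈ {g : ℝ | ∃ u : ℕ → ℝ,
        (∑ k ∈ Finset.range (kf + 1), |u k| ^ p) ^ (1 / p) = 1 ∧
        g = (∑ k ∈ Finset.range (kf + 1), |netTraj A s u k i| ^ p) ^ (1 / p)} :=
    ⟨u0, hnorm, rfl⟩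
  calc (0 : ℝ) ≤ (∑ k ∈ Finset.range (kf + 1), |netTraj A s u0 k i| ^ p) ^ (1 / p) :=
        Real.rpow_nonneg (Finset.sum_nonneg fun k _ =>
          Real.rpow_nonneg (abs_nonneg _) p) _
    _ ≤ lpGain A s i p kf := le_csSup (lp_set_bddAbove hA hrow i hp kf) hmem

lemma linf_set_bddAbove (hA : ∀ i j, 0 ≤ A i j) (hrow : ∀ i, ∑ j, A i j ≤ 1)
    (i : Fin n) (kf : ℕ) :
    BddAbove {g : ℝ | ∃ u : ℕ → ℝ, (∀ k ≤ kf, |u k| ≤ 1) ∧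
      g = (Finset.range (kf + 1)).sup' (by simp) (fun k => |netTraj A s u k i|)} := by
  refine ⟨(kf : ℝ), ?_⟩
  rintro g ⟨u, hu1, rfl⟩
  have htraj := traj_le (A := A) (s := s) hA hrow u (K := kf)
    (fun k' hk' => hu1 k' (le_of_lt hk'))
  refine Finset.sup'_le _ _ fun k hk => ?_
  calc |netTraj A s u k i| ≤ (k : ℝ) :=
        htraj k (Nat.lt_succ_iff.1 (Finset.mem_range.1 hk)) i
    _ ≤ (kf : ℝ) := Nat.cast_le.2 (Nat.lt_succ_iff.1 (Finset.mem_range.1 hk))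

lemma linfGain_nonneg (hA : ∀ i j, 0 ≤ A i j) (hrow : ∀ i, ∑ j, A i j ≤ 1)
    (i : Fin n) (kf : ℕ) : 0 ≤ linfGain A s i kf := by
  have hmem : (Finset.range (kf + 1)).sup' (by simp)
        (fun k => |netTraj A s (fun _ => 0) k i|)
      ∈ {g : ℝ | ∃ u : ℕ → ℝ, (∀ k ≤ kf, |u k| ≤ 1) ∧
        g = (Finset.range (kf + 1)).sup' (by simp) (fun k => |netTraj A s u k i|)} :=
    ⟨fun _ => 0, fun k _ => by simp, rfl⟩
  calc (0 : ℝ) ≤ |netTraj A s (fun _ => 0) 0 i| := abs_nonneg _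
    _ ≤ (Finset.range (kf + 1)).sup' (by simp)
        (fun k => |netTraj A s (fun _ => 0) k i|) :=
        Finset.le_sup' (fun k => |netTraj A s (fun _ => 0) k i|)
          (Finset.mem_range.2 (Nat.succ_pos kf))
    _ ≤ linfGain A s i kf := le_csSup (linf_set_bddAbove hA hrow i kf) hmem

end Aux4

/-- For substochastic nonnegative `A`, assuming all vertices at
positive distance from `s` have self-weight `< 1`, the maximum finite-horizon
gain over the distance-`d` level set is nonincreasing in `d` (where the level
sets are nonempty): every node at distance `d+1` has gain dominated by that of
some node at distance `d`; this holds for every `l_p` gain (`1 ≤ p < ∞`) and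
for the `l_∞` gain. -/
theorem max_gain_nonincreasing_in_distance {n : ℕ}
    (A : Matrix (Fin n) (Fin n) ℝ)
    (hA : ∀ i j, 0 ≤ A i j) (hrow : ∀ i, ∑ j, A i j ≤ 1)
    (s : Fin n)
    (hself : ∀ q : Fin n, (∃ d > 0, DistEq A s q d) → A q q < 1)
    (d : ℕ)
    (hDd : ∃ i, DistEq A s i d) (hDd1 : ∃ i, DistEq A s i (d + 1))
    (kf : ℕ) :
    (∀ p : ℝ, 1 ≤ p → ∀ i, DistEq A s i (d + 1) →
      ∃ c, DistEq A s c d ∧ lpGain A s i p kf ≤ lpGain A s c p kf) ∧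
    (∀ i, DistEq A s i (d + 1) →
      ∃ c, DistEq A s c d ∧ linfGain A s i kf ≤ linfGain A s c kf) := by
  classical
  set D : Finset (Fin n) := Finset.univ.filter (fun c => DistEq A s c d) with hDdef
  have hD : ∀ c, c ∈ D ↔ DistEq A s c d := fun c => by simp [hDdef]
  obtain ⟨c0, hc0⟩ := hDd
  have hDne : D.Nonempty := ⟨c0, (hD c0).2 hc0⟩
  constructor
  · -- l_p case
    intro p hp i hi
    obtain ⟨cstar, hcD, hcmax⟩ :=
      Finset.exists_max_image D (fun c => lpGain A s c p kf) hDne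
    refine ⟨cstar, (hD cstar).1 hcD, ?_⟩
    refine Real.sSup_le ?_ (lpGain_nonneg hA hrow cstar hp kf)
    rintro g ⟨u, hu1, rfl⟩
    have hinv := lp_invariant hA hrow hp u d kf D hD hDne kf le_rfl i ⟨d + 1, le_rfl, hi⟩
    obtain ⟨c1, hc1D, hc1eq⟩ := Finset.exists_mem_eq_sup' hDne
      (fun c => ∑ k ∈ Finset.range (kf + 1), |netTraj A s u k c| ^ p)
    have h1 : (∑ k ∈ Finset.range (kf + 1), |netTraj A s u k i| ^ p) ^ (1 / p)
        ≤ (∑ k ∈ Finset.range (kf + 1), |netTraj A s u k c1| ^ p) ^ (1 / p) := by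
      refine Real.rpow_le_rpow
        (Finset.sum_nonneg fun k _ => Real.rpow_nonneg (abs_nonneg _) p)
        (hinv.trans_eq hc1eq) (by positivity)
    have h2 : (∑ k ∈ Finset.range (kf + 1), |netTraj A s u k c1| ^ p) ^ (1 / p)
        ≤ lpGain A s c1 p kf :=
      le_csSup (lp_set_bddAbove hA hrow c1 hp kf) ⟨u, hu1, rfl⟩
    exact h1.trans (h2.trans (hcmax c1 hc1D))
  · -- l_∞ case
    intro i hi
    obtain ⟨cstar, hcD, hcmax⟩ :=
      Finset.exists_max_image D (fun c => linfGain A s c kf) hDne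
    refine ⟨cstar, (hD cstar).1 hcD, ?_⟩
    refine Real.sSup_le ?_ (linfGain_nonneg hA hrow cstar kf)
    rintro g ⟨u, hu1, rfl⟩
    obtain ⟨c1, hc1D, hc1eq⟩ := Finset.exists_mem_eq_sup' hDne
      (fun c => (Finset.range (kf + 1)).sup' (by simp) (fun k => |netTraj A s u k c|))
    have h1 : (Finset.range (kf + 1)).sup' (by simp) (fun k => |netTraj A s u k i|)
        ≤ (Finset.range (kf + 1)).sup' (by simp) (fun k => |netTraj A s u k c1|) := by
      refine Finset.sup'_le _ _ fun K hK => ?_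
      have := linf_invariant hA hrow u d kf D hD hDne K
        (Nat.lt_succ_iff.1 (Finset.mem_range.1 hK)) i ⟨d + 1, le_rfl, hi⟩
      exact this.trans_eq hc1eq
    have h2 : (Finset.range (kf + 1)).sup' (by simp) (fun k => |netTraj A s u k c1|)
        ≤ linfGain A s c1 kf :=
      le_csSup (linf_set_bddAbove hA hrow c1 kf) ⟨u, hu1, rfl⟩
    exact h1.trans (h2.trans (hcmax c1 hc1D))
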